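/- In Γ_Δ(D), for vertices X and Y with Y = 12⋯D and 0 < k < D, the distance d(X,Y) = k holds if and only if: (a) the letter D occurs in X, say x_j = D; (b) every letter among x_1,…,x_j occurs in Y (i.e., is at most D); and (c) (k+1, k+2, …, D) is a subsequence of X but (k, k+1, …, D) is not. -/

import Mathlib

/-- `l` is a vertex of the cycle prefix digraph `Γ_Δ(D)`: a sequence of `D`
distinct letters from the alphabet `{1, …, Δ+1}`. -/
def IsVtx (Δ D : ℕ) (l : List ℕ) : Prop :=
  l.length = D ∧ l.Nodup ∧ ∀ x ∈ l, 1 ≤ x ∧ x ≤ Δ + 1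

/-- Adjacency in `Γ_Δ(D, -r)` (for `r = 0` this is `Γ_Δ(D)` itself): arcs are the
rotations `R_k` for `r+2 ≤ k ≤ D` (0-indexed: move the letter at index `j`,
`r+1 ≤ j ≤ D-1`, to the front) and the shifts `S_y` for letters `y` not in the
sequence. -/
def adjR (Δ D r : ℕ) (X Y : List ℕ) : Prop :=
  IsVtx Δ D X ∧ IsVtx Δ D Y ∧
    ((∃ j, r + 1 ≤ j ∧ j < D ∧ Y = X.getD j 0 :: X.eraseIdx j) ∨
     (∃ y, y ∉ X ∧ Y = y :: X.dropLast))

/-- `w` is a directed walk of length `n` from `u` to `v` in the digraph with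
adjacency relation `A`. -/
def IsWalk {V : Type*} (A : V → V → Prop) (u v : V) (n : ℕ) (w : ℕ → V) : Prop :=
  w 0 = u ∧ w n = v ∧ ∀ i < n, A (w i) (w (i + 1))

/-- Directed distance: the least length of a directed walk from `u` to `v`. -/
noncomputable def cpDist {V : Type*} (A : V → V → Prop) (u v : V) : ℕ :=
  sInf {n | ∃ w, IsWalk A u v n w}

open List

lemma cp_sublist_cons_of_not_mem {l t : List ℕ} {a : ℕ} (h : l <+ a :: t) (ha : a ∉ l) :
    l <+ t := by
  cases h with
  | cons _ h => exact h
  | cons_cons _ h => exact absurd mem_cons_self ha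

lemma cp_sublist_eraseIdx_of_not_mem :
    ∀ (L : List ℕ) (j : ℕ) (l : List ℕ), l <+ L → j < L.length → L.getD j 0 ∉ l →
      l <+ L.eraseIdx j := by
  intro L
  induction L with
  | nil => intro j l _ hj; simp at hj
  | cons a L ih =>
    intro j l h hj hv
    cases j with
    | zero => simpa using cp_sublist_cons_of_not_mem h (by simpa using hv)
    | succ j =>
      rw [eraseIdx_cons_succ]
      cases h with
      | cons _ h => exact (ih j l h (by simpa using hj) (by simpa using hv)).cons a
      | cons_cons _ h =>
        refine (ih j _ h (by simpa using hj) ?_).cons₂ a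
        intro hc
        simp only [getD_cons_succ] at hv
        exact hv (mem_cons_of_mem _ hc)

lemma cp_pair_sublist {L : List ℕ} {p q : ℕ} (hpq : p < q) (hq : q < L.length) :
    [L[p]'(lt_trans hpq hq), L[q]] <+ L := by
  have h1 : L.drop p = L[p]'(lt_trans hpq hq) :: L.drop (p+1) := by
    rw [List.drop_eq_getElem_cons (lt_trans hpq hq)]
  have hq' : q - (p+1) < (L.drop (p+1)).length := by
    rw [List.length_drop]; omega
  have h2 : L[q] ∈ L.drop (p+1) := by
    rw [List.mem_iff_getElem]
    refine ⟨q - (p+1), hq', ?_⟩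
    rw [List.getElem_drop]
    congr 1; omega
  have h3 : [L[p]'(lt_trans hpq hq), L[q]] <+ L.drop p := by
    rw [h1]
    exact (List.singleton_sublist.mpr h2).cons₂ _
  exact h3.trans (List.drop_sublist p L)

/-- Extract index structure from a 2-element sublist. -/
lemma cp_pair_sublist_iff {a b : ℕ} {L : List ℕ} :
    [a, b] <+ L ↔ ∃ p q, ∃ hpq : p < q, ∃ hq : q < L.length, L[p]'(hpq.trans hq) = a ∧ L[q] = b := by
  constructor
  · intro h
    induction L with
    | nil => simp at h
    | cons c L ih =>
      cases h with
      | cons _ h =>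
        obtain ⟨p, q, hpq, hq, ha, hb⟩ := ih h
        exact ⟨p+1, q+1, by omega, by simpa using hq, by simpa using ha, by simpa using hb⟩
      | cons_cons _ h =>
        have hb : b ∈ L := List.singleton_sublist.mp h
        obtain ⟨q, hq, hbq⟩ := List.mem_iff_getElem.mp hb
        exact ⟨0, q+1, by omega, by simpa using hq, rfl, by simpa using hbq⟩
  · rintro ⟨p, q, hpq, hq, ha, hb⟩
    subst ha; subst hb
    exact cp_pair_sublist hpq hq

/-- If the last element is not in `l` structurally: drop-last preservation for pairs. -/
lemma cp_pair_sublist_dropLast {c d : ℕ} {L : List ℕ} (hnd : L.Nodup)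
    (h : [c, d] <+ L) (hdm : d ∈ L.dropLast) : [c, d] <+ L.dropLast := by
  have hne : L ≠ [] := by rintro rfl; simp at h
  have hL : L.dropLast ++ [L.getLast hne] = L := List.dropLast_append_getLast hne
  rw [← hL] at h
  obtain ⟨l₁, l₂, hsplit, h1, h2⟩ := List.sublist_append_iff.mp h
  rcases List.sublist_singleton.mp h2 with h2' | h2'
  · subst h2'
    rw [List.append_nil] at hsplit
    rwa [hsplit]
  · subst h2'
    have : l₁ ++ [L.getLast hne] = [c] ++ [d] := by simpa using hsplit.symm
    have hld : L.getLast hne = d := by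
      have := (List.append_inj' this (by simp)).2
      simpa using this
    rw [← hL] at hnd
    have hdisj := (List.nodup_append.mp hnd).2.2
    exact (hdisj d hdm d (by simp [hld]) rfl).elim

variable {Δ D : ℕ}

lemma cp_adj_tail {U V : List ℕ} (h : adjR Δ D 0 U V) : V.drop 1 <+ U := by
  rcases h.2.2 with ⟨j, _, _, hV⟩ | ⟨y, _, hV⟩
  · rw [hV]; simpa using List.eraseIdx_sublist U j
  · rw [hV]; simpa using List.dropLast_sublist U

lemma cp_walk_vtx {A : List ℕ → List ℕ → Prop} {u v : List ℕ} {n : ℕ} {w : ℕ → List ℕ}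
    (hA : ∀ a b, A a b → IsVtx Δ D a ∧ IsVtx Δ D b)
    (hw : IsWalk A u v n w) (hu : IsVtx Δ D u) : ∀ t ≤ n, IsVtx Δ D (w t) := by
  intro t ht
  cases t with
  | zero => rwa [hw.1]
  | succ t => exact (hA _ _ (hw.2.2 t (by omega))).2

lemma cp_adjR_vtx : ∀ a b, adjR Δ D 0 a b → IsVtx Δ D a ∧ IsVtx Δ D b :=
  fun _ _ h => ⟨h.1, h.2.1⟩

lemma cp_walk_drop {u v : List ℕ} :
    ∀ (n : ℕ) (w : ℕ → List ℕ), IsWalk (adjR Δ D 0) u v n w → v.drop n <+ u := by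
  intro n
  induction n generalizing u with
  | zero => intro w hw; rw [← hw.1, ← hw.2.1]; simp
  | succ n ih =>
    intro w hw
    have h0 : adjR Δ D 0 u (w 1) := by
      have := hw.2.2 0 (by omega); rwa [hw.1] at this
    have hw' : IsWalk (adjR Δ D 0) (w 1) v n (fun i => w (i+1)) :=
      ⟨rfl, by simpa [Nat.add_comm] using hw.2.1, fun i hi => hw.2.2 (i+1) (by omega)⟩
    have h1 : v.drop n <+ w 1 := ih _ hw'
    have h2 : (v.drop n).drop 1 <+ (w 1).drop 1 := h1.drop 1
    rw [List.drop_drop] at h2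
    exact h2.trans (cp_adj_tail h0)


lemma cp_claimB {n : ℕ} (hnD : n < D) {X : List ℕ} {w : ℕ → List ℕ}
    (hX : IsVtx Δ D X) (hD : 0 < D)
    (hw : IsWalk (adjR Δ D 0) X (List.range' 1 D) n w) :
    ∀ t, t ≤ n → ∃ q, ∃ hq : q < (w t).length, (w t)[q] = D ∧ D ≤ q + (n - t) + 1 := by
  have aux : ∀ m t, t + m = n → ∃ q, ∃ hq : q < (w t).length, (w t)[q] = D ∧ D ≤ q + (n - t) + 1 := by
    intro m
    induction m with
    | zero =>
      intro t ht
      have htn : t = n := by omega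
      subst htn
      rw [hw.2.1]
      refine ⟨D - 1, by simpa using hD, ?_, by omega⟩
      rw [List.getElem_range']
      omega
    | succ m ih =>
      intro t ht
      obtain ⟨q', hq', hval, har⟩ := ih (t+1) (by omega)
      have htn : t < n := by omega
      have hadj := hw.2.2 t htn
      have hlt : (w t).length = D := hadj.1.1
      have hlt1 : (w (t+1)).length = D := hadj.2.1.1
      have hq'1 : 1 ≤ q' := by
        rcases Nat.eq_zero_or_pos q' with h0 | h0
        · subst h0; omega
        · exact h0
      obtain ⟨q'', rfl⟩ : ∃ q'', q' = q'' + 1 := ⟨q' - 1, by omega⟩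
      rcases hadj.2.2 with ⟨j, hj1, hjD, hV⟩ | ⟨y, hy, hV⟩
      · simp only [hV] at hval hq'
        have hq2 : q'' < ((w t).eraseIdx j).length := by simpa using hq'
        rw [List.getElem_cons_succ] at hval
        rw [List.getElem_eraseIdx] at hval
        split at hval
        · exact ⟨q'', by omega, hval, by omega⟩
        · have hb : q'' + 1 < (w t).length := by
            rw [List.length_eraseIdx] at hq2
            split at hq2 <;> omega
          exact ⟨q'' + 1, hb, hval, by omega⟩
      · simp only [hV] at hval hq'
        have hq2 : q'' < ((w t).dropLast).length := by simpa using hq'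
        rw [List.getElem_cons_succ, List.getElem_dropLast] at hval
        have hb : q'' < (w t).length := by
          rw [List.length_dropLast] at hq2; omega
        exact ⟨q'', hb, hval, by omega⟩
  intro t ht
  exact aux (n - t) t (by omega)

lemma cp_no_short_walk {n : ℕ} (hnD : n < D) {X : List ℕ} {w : ℕ → List ℕ}
    (hX : IsVtx Δ D X) (hD : 0 < D)
    (hw : IsWalk (adjR Δ D 0) X (List.range' 1 D) n w)
    {c : ℕ} (hc : D < c) (hpair : [c, D] <+ X) : False := by
  have claimC : ∀ t, t ≤ n → [c, D] <+ w t := by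
    intro t
    induction t with
    | zero => intro _; rw [hw.1]; exact hpair
    | succ t ih =>
      intro ht
      have IH := ih (by omega)
      have hadj := hw.2.2 t (by omega)
      have hlt : (w t).length = D := hadj.1.1
      have hnd : (w t).Nodup := hadj.1.2.1
      have hnd1 : (w (t+1)).Nodup := hadj.2.1.2.1
      obtain ⟨q, hq, hval, har⟩ := cp_claimB hnD hX hD hw (t+1) ht
      have hq1 : 1 ≤ q := by
        rcases Nat.eq_zero_or_pos q with h0 | h0
        · subst h0; omega
        · exact h0
      obtain ⟨q1, rfl⟩ : ∃ q1, q = q1 + 1 := ⟨q - 1, by omega⟩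
      rcases hadj.2.2 with ⟨j, hj1, hjD, hV⟩ | ⟨y, hy, hV⟩
      · -- rotation
        have hDm : D ∈ (w t).eraseIdx j := by
          simp only [hV] at hval hq
          rw [List.getElem_cons_succ] at hval
          exact List.mem_iff_getElem.mpr ⟨q1, by simpa using hq, hval⟩
        by_cases hz : (w t).getD j 0 = c
        · rw [hV, hz]
          exact (List.singleton_sublist.mpr hDm).cons₂ _
        · have hzD : (w t).getD j 0 ≠ D := by
            intro h
            have h0 : (w (t+1))[0]'(by omega) = D := by
              have heq := List.getElem_of_eq hV (by omega : 0 < (w (t+1)).length)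
              rw [heq, List.getElem_cons_zero]
              rwa [List.getD_eq_getElem _ _ (by omega : j < (w t).length)] at h
            have := hnd1.getElem_inj_iff.mp (h0.trans hval.symm)
            omega
          rw [hV]
          refine (cp_sublist_eraseIdx_of_not_mem _ j _ IH (by omega) ?_).cons _
          simp only [List.mem_cons, List.mem_singleton, not_or]
          exact ⟨hz, by simpa using hzD⟩
      · -- shift
        have hDm : D ∈ (w t).dropLast := by
          simp only [hV] at hval hq
          rw [List.getElem_cons_succ] at hval
          exact List.mem_iff_getElem.mpr ⟨q1, by simpa using hq, hval⟩
        rw [hV]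
        exact (cp_pair_sublist_dropLast hnd IH hDm).cons _
  have hfin := claimC n le_rfl
  rw [hw.2.1] at hfin
  have : c ∈ List.range' 1 D := hfin.subset (by simp)
  rw [List.mem_range'_1] at this
  omega


lemma cp_cons_sublist_cases {a b : ℕ} {l t : List ℕ} (h : a :: l <+ b :: t) :
    (a :: l) <+ t ∨ (a = b ∧ l <+ t) := by
  cases h with
  | cons _ h => exact Or.inl h
  | cons_cons _ h => exact Or.inr ⟨rfl, h⟩

lemma cp_not_mem_eraseIdx_self {L : List ℕ} (hnd : L.Nodup) {j : ℕ} (hj : j < L.length) :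
    L[j] ∉ L.eraseIdx j := by
  intro hmem
  obtain ⟨i, hi, hval⟩ := List.mem_iff_getElem.mp hmem
  rw [List.getElem_eraseIdx] at hval
  have hlen : (L.eraseIdx j).length = L.length - 1 := by
    rw [List.length_eraseIdx]; simp [hj]
  split at hval
  · have := hnd.getElem_inj_iff.mp hval
    omega
  · have := hnd.getElem_inj_iff.mp hval
    omega

lemma cp_mem_eraseIdx {L : List ℕ} {j : ℕ} (hj : j < L.length) {a : ℕ}
    (ha : a ∈ L) (hne : L[j] ≠ a) : a ∈ L.eraseIdx j := by
  obtain ⟨i, hi, hval⟩ := List.mem_iff_getElem.mp ha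
  have hlen : (L.eraseIdx j).length = L.length - 1 := by
    rw [List.length_eraseIdx]; simp [hj]
  have hij : i ≠ j := by rintro rfl; exact hne hval
  rcases Nat.lt_or_ge i j with h | h
  · refine List.mem_iff_getElem.mpr ⟨i, by omega, ?_⟩
    rw [List.getElem_eraseIdx]
    simp only [h, dif_pos]
    exact hval
  · have hij' : j < i := by omega
    refine List.mem_iff_getElem.mpr ⟨i - 1, by omega, ?_⟩
    rw [List.getElem_eraseIdx]
    have : ¬ (i - 1 < j) := by omega
    simp only [this, dif_neg, not_false_iff]
    have : i - 1 + 1 = i := by omega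
    simp_rw [this]
    exact hval

lemma cp_walk_cons {A : List ℕ → List ℕ → Prop} {X X' Z : List ℕ} {n : ℕ} {w' : ℕ → List ℕ}
    (h : A X X') (hw : IsWalk A X' Z n w') :
    IsWalk A X Z (n+1) (fun i => if i = 0 then X else w' (i-1)) := by
  refine ⟨by simp, by simp [hw.2.1], ?_⟩
  intro i hi
  cases i with
  | zero => simpa [hw.1] using h
  | succ i =>
    simp only [Nat.succ_ne_zero, if_false, Nat.add_sub_cancel]
    exact hw.2.2 i (by omega)


lemma cp_build (hΔ : D ≤ Δ) :
    ∀ (k : ℕ), k ≤ D → ∀ X : List ℕ, IsVtx Δ D X →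
      D ∈ X → (∀ c ∈ X, D < c → [D, c] <+ X) →
      (List.range' (k+1) (D-k)) <+ X → ¬ (List.range' k (D-k+1)) <+ X →
      ∃ w, IsWalk (adjR Δ D 0) X (List.range' 1 D) k w := by
  intro k
  induction k with
  | zero =>
    intro _ X hX _ _ hsub _
    have hlen : X.length = D := hX.1
    have hXeq : List.range' 1 D = X := hsub.eq_of_length (by simp [hlen])
    exact ⟨fun _ => X, rfl, hXeq.symm, fun i hi => absurd hi (by omega)⟩
  | succ k ih =>
    intro hkD X hX hDX hgood hsub hneg
    have hlen : X.length = D := hX.1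
    have hnd : X.Nodup := hX.2.1
    have halpha := hX.2.2
    -- rule out k + 1 = D
    rcases Nat.lt_or_ge (k+1) D with hkD' | hge
    swap
    · exfalso
      have h1 : D - (k+1) + 1 = 1 := by omega
      have h2 : k + 1 = D := by omega
      apply hneg
      rw [h1, h2]
      simpa [List.range'_succ] using hDX
    have hDk1 : D - (k+1) = D - k - 1 := by omega
    have hDk : D - k = (D - k - 1) + 1 := by omega
    have hsplit1 : List.range' (k+1) (D-k) = (k+1) :: List.range' (k+2) (D-k-1) := by
      conv_lhs => rw [hDk, List.range'_succ]
    have hsub2 : List.range' (k+2) (D-k-1) <+ X := by rwa [hDk1] at hsub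
    have hneg2 : ¬ (List.range' (k+1) (D-k)) <+ X := by
      intro h
      apply hneg
      have : D - (k+1) + 1 = D - k := by omega
      rwa [this]
    have hm1 : (k+1) ∈ List.range' (k+1) (D-k) := by
      rw [List.mem_range'_1]; omega
    have hmnotr : (k+1) ∉ List.range' (k+2) (D-k-1) := by
      rw [List.mem_range'_1]; omega
    have hsplitk : List.range' k (D-k+1) = k :: List.range' (k+1) (D-k) := by
      rw [show D - k + 1 = (D-k) + 1 from rfl, List.range'_succ]
    by_cases hm : (k+1) ∈ X
    · -- rotation case
      set j := List.idxOf (k+1) X with hj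
      have hjlen : j < X.length := List.idxOf_lt_length_iff.mpr hm
      have hgetj : X[j] = (k+1) := List.getElem_idxOf hjlen
      have hgetDj : X.getD j 0 = (k+1) := by
        rw [List.getD_eq_getElem _ _ hjlen, hgetj]
      -- j ≥ 1
      have hj1 : 1 ≤ j := by
        by_contra h0
        have hj0 : j = 0 := by omega
        obtain ⟨a, T, rfl⟩ : ∃ a T, X = a :: T := by
          cases X with
          | nil => simp at hlen; omega
          | cons a T => exact ⟨a, T, rfl⟩
        have ha : a = k + 1 := by
          have h' := hgetj
          simp only [hj0] at h'
          simpa using h'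
        apply hneg2
        rw [hsplit1, ← ha]
        exact (cp_sublist_cons_of_not_mem hsub2 (by rw [ha]; exact hmnotr)).cons₂ a
      have hnotmem := cp_not_mem_eraseIdx_self hnd hjlen
      rw [hgetj] at hnotmem
      have hlenE : (X.eraseIdx j).length = D - 1 := by
        rw [List.length_eraseIdx, if_pos hjlen, hlen]
      have hvtx' : IsVtx Δ D ((k+1) :: X.eraseIdx j) := by
        refine ⟨by rw [List.length_cons, hlenE]; omega, ?_, ?_⟩
        · exact List.nodup_cons.mpr ⟨hnotmem, ((List.eraseIdx_sublist X j).nodup hnd)⟩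
        · intro x hx
          rcases List.mem_cons.mp hx with rfl | hx
          · omega
          · exact halpha x ((List.eraseIdx_sublist X j).subset hx)
      have hadj : adjR Δ D 0 X ((k+1) :: X.eraseIdx j) := by
        refine ⟨hX, hvtx', Or.inl ⟨j, by omega, by omega, ?_⟩⟩
        rw [hgetDj]
      have hDmem' : D ∈ (k+1) :: X.eraseIdx j := by
        exact List.mem_cons_of_mem _ (cp_mem_eraseIdx hjlen hDX (by omega))
      have hgood' : ∀ c ∈ (k+1) :: X.eraseIdx j, D < c → [D, c] <+ (k+1) :: X.eraseIdx j := by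
        intro c hc hDc
        rcases List.mem_cons.mp hc with rfl | hc
        · omega
        · have hpX : [D, c] <+ X := hgood c ((List.eraseIdx_sublist X j).subset hc) hDc
          have hnm : X.getD j 0 ∉ ([D, c] : List ℕ) := by
            rw [hgetDj]
            intro hmem
            rcases List.mem_cons.mp hmem with h | h
            · omega
            · simp at h; omega
          exact (cp_sublist_eraseIdx_of_not_mem X j _ hpX hjlen hnm).cons _
      have hsub' : List.range' (k+1) (D-k) <+ (k+1) :: X.eraseIdx j := by
        rw [hsplit1]
        exact (cp_sublist_eraseIdx_of_not_mem X j _ hsub2 hjlen (by rw [hgetDj]; exact hmnotr)).cons₂ _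
      have hneg' : ¬ (List.range' k (D-k+1)) <+ (k+1) :: X.eraseIdx j := by
        rw [hsplitk]
        intro h
        rcases cp_cons_sublist_cases h with h | ⟨heq, _⟩
        · exact hnotmem (h.subset (List.mem_cons_of_mem _ hm1))
        · omega
      obtain ⟨w', hw'⟩ := ih (by omega) _ hvtx' hDmem' hgood' hsub' hneg'
      exact ⟨_, cp_walk_cons hadj hw'⟩
    · -- shift case
      have hne : X ≠ [] := by
        intro h; rw [h] at hlen; simp at hlen; omega
      have hXdec : X.dropLast ++ [X.getLast hne] = X := List.dropLast_append_getLast hne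
      have hndsplit : X.dropLast.Nodup ∧ (X.getLast hne) ∉ X.dropLast := by
        have := hnd
        rw [← hXdec, List.nodup_append] at this
        exact ⟨this.1, fun hc => this.2.2 _ hc _ (by simp) rfl⟩
      -- last element is not D
      have heD : X.getLast hne ≠ D := by
        intro he
        -- every element of dropLast is in Icc 1 (D-1)
        have hsubset : X.dropLast.toFinset ⊆ Finset.Icc 1 (D-1) := by
          intro c hc
          rw [List.mem_toFinset] at hc
          have hcX : c ∈ X := (List.dropLast_sublist X).subset hc
          have hc1 : 1 ≤ c := (halpha c hcX).1
          have hcneD : c ≠ D := by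
            intro h; rw [h] at hc; exact hndsplit.2 (he ▸ hc)
          have hcD : c ≤ D := by
            by_contra hgt
            have hp : [D, c] <+ X := hgood c hcX (by omega)
            rw [← hXdec, he] at hp
            obtain ⟨l₁, l₂, hs, h1, h2⟩ := List.sublist_append_iff.mp hp
            rcases List.sublist_singleton.mp h2 with rfl | rfl
            · rw [List.append_nil] at hs
              rw [← hs] at h1
              exact hndsplit.2 (he ▸ h1.subset (by simp))
            · have h' : [D] ++ [c] = l₁ ++ [D] := hs
              have : ([c] : List ℕ) = [D] := (List.append_inj' h' rfl).2
              simp at this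
              omega
          rw [Finset.mem_Icc]; omega
        have hcard : (Finset.Icc 1 (D-1)).card ≤ X.dropLast.toFinset.card := by
          rw [List.toFinset_card_of_nodup hndsplit.1, Nat.card_Icc, List.length_dropLast, hlen]
          omega
        have hEq := Finset.eq_of_subset_of_card_le hsubset hcard
        have hmem : (k+1) ∈ X.dropLast.toFinset := by
          rw [hEq, Finset.mem_Icc]; omega
        rw [List.mem_toFinset] at hmem
        exact hm ((List.dropLast_sublist X).subset hmem)
      have hDdl : D ∈ X.dropLast := by
        have h' : D ∈ X.dropLast ++ [X.getLast hne] := by rw [hXdec]; exact hDX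
        rcases List.mem_append.mp h' with h | h
        · exact h
        · simp at h; exact absurd h.symm heD
      have hlenD : (X.dropLast).length = D - 1 := by
        rw [List.length_dropLast, hlen]
      have hmdl : (k+1) ∉ X.dropLast := fun hc => hm ((List.dropLast_sublist X).subset hc)
      have hvtx' : IsVtx Δ D ((k+1) :: X.dropLast) := by
        refine ⟨by rw [List.length_cons, hlenD]; omega, List.nodup_cons.mpr ⟨hmdl, hndsplit.1⟩, ?_⟩
        intro x hx
        rcases List.mem_cons.mp hx with rfl | hx
        · omega
        · exact halpha x ((List.dropLast_sublist X).subset hx)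
      have hadj : adjR Δ D 0 X ((k+1) :: X.dropLast) := ⟨hX, hvtx', Or.inr ⟨k+1, hm, rfl⟩⟩
      have hgood' : ∀ c ∈ (k+1) :: X.dropLast, D < c → [D, c] <+ (k+1) :: X.dropLast := by
        intro c hc hDc
        rcases List.mem_cons.mp hc with rfl | hc
        · omega
        · exact (cp_pair_sublist_dropLast hnd
            (hgood c ((List.dropLast_sublist X).subset hc) hDc) hc).cons _
      -- the kept subsequence survives dropLast
      have hsub2' : List.range' (k+2) (D-k-1) <+ X.dropLast := by
        by_cases her : X.getLast hne ∈ List.range' (k+2) (D-k-1)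
        · -- then [getLast, D] <+ range' ⊆ X, so getLast ∈ dropLast: contradiction
          exfalso
          have herD : X.getLast hne < D := by
            rw [List.mem_range'_1] at her
            rcases Nat.lt_or_ge (X.getLast hne) D with h | h
            · exact h
            · exact absurd (by omega : X.getLast hne = D) heD
          have hpair : [X.getLast hne, D] <+ List.range' (k+2) (D-k-1) := by
            rw [List.mem_range'_1] at her
            refine cp_pair_sublist_iff.mpr ⟨X.getLast hne - (k+2), D - k - 2, by omega, by rw [List.length_range']; omega, ?_, ?_⟩
            · rw [List.getElem_range']; omega
            · rw [List.getElem_range']; omega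
          have hpX : [X.getLast hne, D] <+ X := hpair.trans hsub2
          have := cp_pair_sublist_dropLast hnd hpX hDdl
          exact hndsplit.2 (this.subset (by simp))
        · -- last not in the range: erase it
          have := cp_sublist_eraseIdx_of_not_mem X (X.length - 1) _ hsub2 (by omega) ?_
          · rwa [← List.dropLast_eq_eraseIdx (by omega : X.length - 1 + 1 = X.length)] at this
          · rw [List.getD_eq_getElem _ _ (by omega : X.length - 1 < X.length),
              ← List.getLast_eq_getElem hne]
            exact her
      have hsub' : List.range' (k+1) (D-k) <+ (k+1) :: X.dropLast := by
        rw [hsplit1]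
        exact hsub2'.cons₂ _
      have hneg' : ¬ (List.range' k (D-k+1)) <+ (k+1) :: X.dropLast := by
        rw [hsplitk]
        intro h
        rcases cp_cons_sublist_cases h with h | ⟨heq, _⟩
        · exact hm ((List.dropLast_sublist X).subset (h.subset (List.mem_cons_of_mem _ hm1)))
        · omega
      obtain ⟨w', hw'⟩ := ih (by omega) _ hvtx' (List.mem_cons_of_mem _ hDdl) hgood' hsub' hneg'
      exact ⟨_, cp_walk_cons hadj hw'⟩


lemma cp_good_of_posn {X : List ℕ} {j : ℕ} (hjlen : j < X.length) (hgetj : X[j] = D)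
    (hbound : ∀ i ≤ j, X.getD i 0 ≤ D) : ∀ c ∈ X, D < c → [D, c] <+ X := by
  intro c hc hDc
  obtain ⟨q, hq, hval⟩ := List.mem_iff_getElem.mp hc
  have hjq : j < q := by
    by_contra h
    have := hbound q (by omega)
    rw [List.getD_eq_getElem _ _ hq, hval] at this
    omega
  have hp := cp_pair_sublist hjq hq
  rw [hgetj, hval] at hp
  exact hp

lemma cp_range'_drop {t : ℕ} (ht : t ≤ D) :
    (List.range' 1 D).drop t = List.range' (t+1) (D-t) := by
  have h := List.range'_append (s := 1) (m := t) (n := D-t) (step := 1)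
  rw [one_mul] at h
  have h2 : t + (D - t) = D := by omega
  rw [h2] at h
  have h3 : (1:ℕ) + t = t + 1 := by omega
  rw [h3] at h
  rw [← h]
  exact List.drop_left' (by simp)

lemma cp_range'_suffix {s₁ s₂ n₁ n₂ : ℕ} (h1 : s₁ ≤ s₂) (h2 : s₂ - s₁ + n₂ = n₁) :
    List.range' s₂ n₂ <+ List.range' s₁ n₁ := by
  have h := List.range'_append (s := s₁) (m := s₂-s₁) (n := n₂) (step := 1)
  rw [one_mul] at h
  have h3 : s₁ + (s₂ - s₁) = s₂ := by omega
  have h4 : s₂ - s₁ + n₂ = n₁ := by omega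
  rw [h3, h4] at h
  rw [← h]
  exact List.sublist_append_right _ _

theorem dist_eq_iff_of_lt' (Δ D k : ℕ) (hΔ : D ≤ Δ) (hk0 : 0 < k) (hkD : k < D)
    (X : List ℕ) (hX : IsVtx Δ D X) :
    cpDist (adjR Δ D 0) X (List.range' 1 D) = k ↔
      ((∃ j < D, X.getD j 0 = D ∧ ∀ i ≤ j, X.getD i 0 ≤ D) ∧
        (List.range' (k + 1) (D - k)).Sublist X ∧
        ¬ (List.range' k (D - k + 1)).Sublist X) := by
  classical
  simp only [cpDist]
  set S : Set ℕ := {n | ∃ w, IsWalk (adjR Δ D 0) X (List.range' 1 D) n w} with hSdef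
  constructor
  · intro hdist
    have hS : S.Nonempty := by
      by_contra h
      rw [Set.not_nonempty_iff_eq_empty] at h
      rw [h, Nat.sInf_empty] at hdist
      omega
    have hmem : k ∈ S := hdist ▸ Nat.sInf_mem hS
    obtain ⟨w, hw⟩ := hmem
    -- (b)
    have hb : List.range' (k+1) (D-k) <+ X := by
      have h := cp_walk_drop k w hw
      rwa [cp_range'_drop (by omega : k ≤ D)] at h
    -- (a)
    have hDX : D ∈ X := hb.subset (by rw [List.mem_range'_1]; omega)
    have hjlen : List.idxOf D X < X.length := List.idxOf_lt_length_iff.mpr hDX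
    have hgetj : X[List.idxOf D X] = D := List.getElem_idxOf hjlen
    have ha : ∀ i ≤ List.idxOf D X, X.getD i 0 ≤ D := by
      intro i hij
      by_contra hgt
      push_neg at hgt
      have hiD : i < X.length := by omega
      rw [List.getD_eq_getElem _ _ hiD] at hgt
      have hine : i < List.idxOf D X := by
        rcases Nat.lt_or_ge i (List.idxOf D X) with h | h
        · exact h
        · exfalso
          have hie : i = List.idxOf D X := by omega
          simp only [hie] at hgt
          rw [hgetj] at hgt
          omega
      have hpair : [X[i], D] <+ X := by
        have hp := cp_pair_sublist hine hjlen
        rwa [hgetj] at hp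
      exact cp_no_short_walk hkD hX (by omega) hw hgt hpair
    have hgood := cp_good_of_posn hjlen hgetj ha
    refine ⟨⟨List.idxOf D X, by have h' := hX.1; omega,
      by rw [List.getD_eq_getElem _ _ hjlen, hgetj], ha⟩, hb, ?_⟩
    -- (c)
    intro hc
    have hP : ∃ t, List.range' (t+1) (D-t) <+ X := by
      refine ⟨k-1, ?_⟩
      rw [show k-1+1 = k from by omega, show D-(k-1) = D-k+1 from by omega]
      exact hc
    have hPs := Nat.find_spec hP
    have hsk : Nat.find hP ≤ k - 1 := Nat.find_min' hP (by
      rw [show k-1+1 = k from by omega, show D-(k-1) = D-k+1 from by omega]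
      exact hc)
    rcases Nat.eq_zero_or_pos (Nat.find hP) with hs0 | hs1
    · rw [hs0] at hPs
      simp only [Nat.sub_zero] at hPs
      have hXeq : List.range' 1 D = X := hPs.eq_of_length (by simp [hX.1])
      have h0 : (0 : ℕ) ∈ S := ⟨fun _ => X, rfl, hXeq.symm, fun i hi => absurd hi (by omega)⟩
      have := Nat.sInf_le h0
      omega
    · have hneg : ¬ List.range' (Nat.find hP) (D - Nat.find hP + 1) <+ X := by
        have h := Nat.find_min hP (show Nat.find hP - 1 < Nat.find hP from by omega)
        rw [show Nat.find hP - 1 + 1 = Nat.find hP from by omega,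
          show D - (Nat.find hP - 1) = D - Nat.find hP + 1 from by omega] at h
        exact h
      obtain ⟨w', hw'⟩ := cp_build hΔ (Nat.find hP) (by omega) X hX hDX hgood hPs hneg
      have := Nat.sInf_le (show Nat.find hP ∈ S from ⟨w', hw'⟩)
      omega
  · rintro ⟨⟨j, hjD, hgetDj, hbound⟩, hb, hc⟩
    have hjlen : j < X.length := by rw [hX.1]; exact hjD
    have hgetj : X[j] = D := by rwa [List.getD_eq_getElem _ _ hjlen] at hgetDj
    have hDX : D ∈ X := List.mem_iff_getElem.mpr ⟨j, hjlen, hgetj⟩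
    have hgood := cp_good_of_posn hjlen hgetj hbound
    obtain ⟨w, hw⟩ := cp_build hΔ k (by omega) X hX hDX hgood hb hc
    have hkS : k ∈ S := ⟨w, hw⟩
    refine le_antisymm (Nat.sInf_le hkS) ?_
    by_contra hlt
    push_neg at hlt
    have hS : S.Nonempty := ⟨k, hkS⟩
    obtain ⟨w', hw'⟩ := Nat.sInf_mem hS
    set n := sInf S with hn
    have hnk : n < k := hlt
    have hdr : List.range' (n+1) (D-n) <+ X := by
      have h := cp_walk_drop n w' hw'
      rwa [cp_range'_drop (by omega : n ≤ D)] at h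
    have hsuf : List.range' k (D-k+1) <+ List.range' (n+1) (D-n) :=
      cp_range'_suffix (by omega) (by omega)
    exact hc (hsuf.trans hdr)


/-- in `Γ_Δ(D)` with `Y = 12⋯D` and `0 < k < D`, the distance
`d(X, Y) = k` iff (a) the letter `D` occurs in `X`, say at position `j`,
(b) every letter among `x_1, …, x_j` is at most `D`, and (c) `(k+1, …, D)` is a
subsequence of `X` but `(k, k+1, …, D)` is not. -/
theorem dist_eq_iff_of_lt (Δ D k : ℕ) (hΔ : D ≤ Δ) (hk0 : 0 < k) (hkD : k < D)
    (X : List ℕ) (hX : IsVtx Δ D X) :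
    cpDist (adjR Δ D 0) X (List.range' 1 D) = k ↔
      ((∃ j < D, X.getD j 0 = D ∧ ∀ i ≤ j, X.getD i 0 ≤ D) ∧
        (List.range' (k + 1) (D - k)).Sublist X ∧
        ¬ (List.range' k (D - k + 1)).Sublist X) :=
  dist_eq_iff_of_lt' Δ D k hΔ hk0 hkD X hX
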